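/- Let A, B be as in the length-2 block-Toeplitz case: A = [[O₂, O₂],[I₂, O₂]] (4×4) and B = [I₂; O₂] (4×2). Let R be the 4×4 matrix with rows (1, 0, 1/2, 3/4), (0, 1, 0, 1/2), (1/2, 0, 1, 0), (3/4, 1/2, 0, 1). Then R is positive semidefinite and singular (the row vector v = (-2, -1, 1, 2) satisfies v R = 0), and the only 2×2 Hermitian positive semidefinite matrix Q such that R - (I₂ ⊗ Q) is positive semidefinite is Q = 0. In particular no nonzero white-noise covariance component can be extracted from R. -/

import Mathlib

open Matrix ComplexOrder

/-- Example: the block-Toeplitz state covariance `R` below is PSD and singular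
(annihilated on the left by `v = (-2,-1,1,2)`), yet the only PSD white-noise
covariance `Q` with `R - diag(Q,Q) ⪰ 0` is `Q = 0`. -/
theorem stmt_15 :
    let R : Matrix (Fin 4) (Fin 4) ℂ :=
      !![1, 0, 1/2, 3/4;
         0, 1, 0, 1/2;
         1/2, 0, 1, 0;
         3/4, 1/2, 0, 1]
    R.PosSemidef ∧
    Matrix.vecMul ![-2, -1, 1, 2] R = 0 ∧
    (∀ Q : Matrix (Fin 2) (Fin 2) ℂ, Q.PosSemidef →
      (R - Matrix.reindex finSumFinEquiv finSumFinEquiv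
            (Matrix.fromBlocks Q 0 0 Q)).PosSemidef → Q = 0) := by
  intro R
  have h3 : (Real.sqrt 3) * (Real.sqrt 3) = 3 := Real.mul_self_sqrt (by norm_num)
  refine ⟨?_, ?_, ?_⟩
  · -- PSD
    have h : R = (!![1, 0, 1/2, 3/4;
           0, 1, 0, 1/2;
           0, 0, (Real.sqrt 3)/2, -(Real.sqrt 3)/4] : Matrix (Fin 3) (Fin 4) ℂ)ᴴ *
        (!![1, 0, 1/2, 3/4;
           0, 1, 0, 1/2;
           0, 0, (Real.sqrt 3)/2, -(Real.sqrt 3)/4] : Matrix (Fin 3) (Fin 4) ℂ) := by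
      show (!![1, 0, 1/2, 3/4;
         0, 1, 0, 1/2;
         1/2, 0, 1, 0;
         3/4, 1/2, 0, 1] : Matrix (Fin 4) (Fin 4) ℂ) = _
      ext i j
      fin_cases i <;> fin_cases j <;>
        simp [Matrix.mul_apply, Matrix.conjTranspose_apply, Fin.sum_univ_three,
            Matrix.vecHead, Matrix.vecTail, div_mul_div_comm, ← Complex.ofReal_mul, h3]
        <;> ring_nf
        <;> norm_num [Complex.ext_iff, ← Complex.ofReal_pow, ← Complex.ofReal_mul, h3]
    rw [h]
    exact Matrix.posSemidef_conjTranspose_mul_self _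
  · -- vecMul
    show Matrix.vecMul ![-2, -1, 1, 2] (!![1, 0, 1/2, 3/4;
         0, 1, 0, 1/2;
         1/2, 0, 1, 0;
         3/4, 1/2, 0, 1] : Matrix (Fin 4) (Fin 4) ℂ) = 0
    funext j
    fin_cases j <;>
      simp [Matrix.vecMul, dotProduct, Fin.sum_univ_four] <;> ring
  · -- uniqueness
    intro Q hQ hS
    have hD : (Matrix.reindex finSumFinEquiv finSumFinEquiv
        (Matrix.fromBlocks Q 0 0 Q) : Matrix (Fin 4) (Fin 4) ℂ) =
      !![Q 0 0, Q 0 1, 0, 0;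
         Q 1 0, Q 1 1, 0, 0;
         0, 0, Q 0 0, Q 0 1;
         0, 0, Q 1 0, Q 1 1] := by
      ext i j
      fin_cases i <;> fin_cases j <;>
        simp [Matrix.fromBlocks, finSumFinEquiv] <;> rfl
    rw [hD] at hS
    have e1 := hQ.dotProduct_mulVec_nonneg ![1, 0]
    have e2 := hQ.dotProduct_mulVec_nonneg ![0, 1]
    have f1 := hQ.dotProduct_mulVec_nonneg ![1, 1]
    have f2 := hQ.dotProduct_mulVec_nonneg ![1, -1]
    have f3 := hQ.dotProduct_mulVec_nonneg ![1, Complex.I]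
    have f4 := hQ.dotProduct_mulVec_nonneg ![1, -Complex.I]
    simp [dotProduct, Matrix.mulVec, Fin.sum_univ_two] at e1 e2 f1 f2 f3 f4
    rw [Complex.le_def] at e1 e2 f1 f2 f3 f4
    simp at e1 e2 f1 f2 f3 f4
    have hb := hQ.1.apply 1 0
    simp at hb
    have hbre : (Q 1 0).re = (Q 0 1).re := by rw [← hb]; simp
    have hbim : (Q 1 0).im = -(Q 0 1).im := by rw [← hb]; simp
    have g := hS.dotProduct_mulVec_nonneg ![-2, -1, 1, 2]
    have hRv : (!![1, 0, 1/2, 3/4;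
         0, 1, 0, 1/2;
         1/2, 0, 1, 0;
         3/4, 1/2, 0, 1] : Matrix (Fin 4) (Fin 4) ℂ) *ᵥ ![-2, -1, 1, 2] = 0 := by
      funext i
      fin_cases i <;>
        simp [Matrix.mulVec, dotProduct, Fin.sum_univ_four] <;> ring
    rw [show (R - !![Q 0 0, Q 0 1, 0, 0;
         Q 1 0, Q 1 1, 0, 0;
         0, 0, Q 0 0, Q 0 1;
         0, 0, Q 1 0, Q 1 1]) *ᵥ ![-2, -1, 1, 2] =
        R *ᵥ ![-2, -1, 1, 2] - (!![Q 0 0, Q 0 1, 0, 0;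
         Q 1 0, Q 1 1, 0, 0;
         0, 0, Q 0 0, Q 0 1;
         0, 0, Q 1 0, Q 1 1]) *ᵥ ![-2, -1, 1, 2] from Matrix.sub_mulVec _ _ _] at g
    rw [show (R *ᵥ ![-2, -1, 1, 2] : Fin 4 → ℂ) = 0 from hRv] at g
    simp [dotProduct, Matrix.mulVec, Fin.sum_univ_four] at g
    rw [Complex.le_def] at g
    simp at g
    have hare : (Q 0 0).re = 0 := by linarith [e1.1, e2.1, f1.1, g.1, hbre]
    have hcre : (Q 1 1).re = 0 := by linarith [e1.1, e2.1, f1.1, g.1, hbre]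
    have hb01re : (Q 0 1).re = 0 := by linarith [f1.1, f2.1, hbre]
    have hb01im : (Q 0 1).im = 0 := by linarith [f3.1, f4.1, hbim]
    have ha : Q 0 0 = 0 := Complex.ext (by simpa using hare) (by simpa using e1.2.symm)
    have hc : Q 1 1 = 0 := Complex.ext (by simpa using hcre) (by simpa using e2.2.symm)
    have hb01 : Q 0 1 = 0 := Complex.ext (by simpa using hb01re) (by simpa using hb01im)
    have hb10 : Q 1 0 = 0 := by rw [← hb, hb01]; simp
    ext i j
    fin_cases i <;> fin_cases j <;> simp [ha, hb01, hb10, hc]
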